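/- Let Γ = N ⋊ Q with N finitely generated, k an algebraically closed field, and ρ : Γ → GL_m(k) a homomorphism such that ρ(N) is Zariski dense in GL_m(k). Then N admits a finite generating set S such that ρ(α) has nonzero trace for every α ∈ S. -/

import Mathlib

open MvPolynomial Matrix

section Aux

variable {k : Type*} [Field k] {m : ℕ}

private lemma exists_eval_ne_zero [Infinite k] {σ : Type*}
    {p : MvPolynomial σ k} (hp : p ≠ 0) : ∃ v : σ → k, eval v p ≠ 0 := by
  by_contra h
  push_neg at h
  exact hp (MvPolynomial.funext fun v => by simpa using h v)

/-- the generic matrix -/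
private noncomputable def Xmat (m : ℕ) (k : Type*) [Field k] :
    Matrix (Fin m) (Fin m) (MvPolynomial (Fin m × Fin m) k) :=
  Matrix.of fun i j => MvPolynomial.X (i, j)

private lemma map_Xmat (v : Fin m × Fin m → k) :
    (Xmat m k).map (eval v) = Matrix.of fun i j => v (i, j) := by
  ext i j; simp [Xmat]

private lemma p16_eval_det (v : Fin m × Fin m → k) :
    eval v (Xmat m k).det = (Matrix.of fun i j => v (i, j)).det := by
  have := (eval v : MvPolynomial (Fin m × Fin m) k →+* k).map_det (Xmat m k)
  rwa [RingHom.mapMatrix_apply, map_Xmat] at this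

private lemma p16_eval_trace (v : Fin m × Fin m → k) :
    eval v (Xmat m k).trace = (Matrix.of fun i j => v (i, j)).trace := by
  have := AddMonoidHom.map_trace (eval v : MvPolynomial (Fin m × Fin m) k →+* k) (Xmat m k)
  rwa [map_Xmat] at this

private lemma p16_eval_trace_mul (v : Fin m × Fin m → k) (A : Matrix (Fin m) (Fin m) k) :
    eval v ((Xmat m k) * A.map C).trace
      = ((Matrix.of fun i j => v (i, j)) * A).trace := by
  have h1 := AddMonoidHom.map_trace (eval v : MvPolynomial (Fin m × Fin m) k →+* k)
    ((Xmat m k) * A.map C)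
  have h2 : ((Xmat m k) * A.map C).map (eval v) = (Matrix.of fun i j => v (i, j)) * A := by
    rw [Matrix.map_mul]
    congr 1
    · exact map_Xmat v
    · ext i j; simp
  rwa [h2] at h1

private lemma p16_eval_trace_adj_mul (v : Fin m × Fin m → k) (A : Matrix (Fin m) (Fin m) k) :
    eval v ((Xmat m k).adjugate * A.map C).trace
      = ((Matrix.of fun i j => v (i, j)).adjugate * A).trace := by
  have h1 := AddMonoidHom.map_trace (eval v : MvPolynomial (Fin m × Fin m) k →+* k)
    ((Xmat m k).adjugate * A.map C)
  have h2 : ((Xmat m k).adjugate * A.map C).map (eval v)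
      = (Matrix.of fun i j => v (i, j)).adjugate * A := by
    rw [Matrix.map_mul]
    congr 1
    · have := RingHom.map_adjugate (eval v : MvPolynomial (Fin m × Fin m) k →+* k) (Xmat m k)
      rw [RingHom.mapMatrix_apply, RingHom.mapMatrix_apply, map_Xmat] at this
      exact this
    · ext i j; simp
  rwa [h2] at h1

private lemma det_Xmat_ne_zero : (Xmat m k).det ≠ 0 := by
  intro h
  have h1 := p16_eval_det (k := k) (m := m) (fun uv => (1 : Matrix (Fin m) (Fin m) k) uv.1 uv.2)
  rw [h] at h1
  have h2 : (Matrix.of fun i j => (1 : Matrix (Fin m) (Fin m) k) (i, j).1 (i, j).2)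
      = (1 : Matrix (Fin m) (Fin m) k) := by ext i j; simp
  rw [h2] at h1
  simp at h1

private lemma trace_Xmat_ne_zero (hm : 0 < m) : (Xmat m k).trace ≠ 0 := by
  intro h
  set i0 : Fin m := ⟨0, hm⟩
  have h1 := p16_eval_trace (k := k) (m := m)
    (fun uv => if uv.1 = uv.2 ∧ uv.1 = i0 then 1 else 0)
  rw [h] at h1
  simp only [map_zero] at h1
  have h2 : ((Matrix.of fun i j => if i = j ∧ i = i0 then (1 : k) else 0)).trace = 1 := by
    simp [Matrix.trace, Matrix.diag]
  rw [← h1] at h2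
  simp at h2

private lemma trace_stdBasis_mul (i j : Fin m) (A : Matrix (Fin m) (Fin m) k) :
    (Matrix.single j i (1 : k) * A).trace = A i j := by
  simp [Matrix.trace, Matrix.diag, Matrix.mul_apply, Matrix.single, ite_and,
    Finset.sum_ite_eq]

private lemma trace_adj_mul_ne_zero [Infinite k] (hm : 0 < m)
    {A : Matrix (Fin m) (Fin m) k} (hA : IsUnit A.det) :
    ((Xmat m k).adjugate * A.map C).trace ≠ 0 := by
  have : Nonempty (Fin m) := ⟨⟨0, hm⟩⟩
  -- A has a nonzero entry
  obtain ⟨i, j, hij⟩ : ∃ i j, A i j ≠ 0 := by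
    by_contra h
    push_neg at h
    have hA0 : A = 0 := by ext i j; exact h i j
    rw [hA0, Matrix.det_zero] at hA
    exact hA.ne_zero rfl
  -- the polynomial det X * trace (X * A) is nonzero
  have hq : (Xmat m k).det * ((Xmat m k) * A.map C).trace ≠ 0 := by
    refine mul_ne_zero det_Xmat_ne_zero ?_
    intro h
    have h1 := p16_eval_trace_mul (k := k) (m := m)
      (fun uv => Matrix.single j i (1 : k) uv.1 uv.2) A
    rw [h] at h1
    have h2 : (Matrix.of fun a b => Matrix.single j i (1 : k) (a, b).1 (a, b).2)
        = Matrix.single j i (1 : k) := by ext a b; simp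
    rw [h2, trace_stdBasis_mul] at h1
    simp only [map_zero] at h1
    exact hij h1.symm
  obtain ⟨v, hv⟩ := exists_eval_ne_zero hq
  set B : Matrix (Fin m) (Fin m) k := Matrix.of fun i j => v (i, j) with hB
  rw [_root_.map_mul, p16_eval_det, p16_eval_trace_mul] at hv
  have hdetB : B.det ≠ 0 := fun h0 => hv (by rw [← hB, h0, zero_mul])
  have htrBA : (B * A).trace ≠ 0 := fun h0 => hv (by rw [← hB, h0, mul_zero])
  -- evaluate the target polynomial at B⁻¹
  intro h
  have h1 := p16_eval_trace_adj_mul (k := k) (m := m) (fun uv => B⁻¹ uv.1 uv.2) A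
  rw [h] at h1
  have h2 : (Matrix.of fun a b => B⁻¹ (a, b).1 (a, b).2) = B⁻¹ := by ext a b; simp
  rw [h2] at h1
  simp only [map_zero] at h1
  -- adjugate B⁻¹ = (det B)⁻¹ • B
  have hiu : IsUnit B.det := Ne.isUnit hdetB
  have hadj : B⁻¹.adjugate = B.det⁻¹ • B := by
    have := Matrix.mul_adjugate B⁻¹
    have h3 : B * (B⁻¹ * B⁻¹.adjugate) = B * (B⁻¹.det • 1) := by rw [this]
    rw [← Matrix.mul_assoc, Matrix.mul_nonsing_inv B hiu, Matrix.one_mul] at h3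
    rw [h3, Matrix.det_nonsing_inv, Ring.inverse_eq_inv]
    rw [Matrix.mul_smul, Matrix.mul_one]
  rw [hadj, Matrix.smul_mul, Matrix.trace_smul, smul_eq_mul] at h1
  exact (mul_ne_zero (inv_ne_zero hdetB) htrBA) h1.symm

end Aux

open SemidirectProduct

/-- Let `Γ = N ⋊ Q` with `N` finitely generated, `k` algebraically
closed, and `ρ : Γ → GL_m(k)` such that `ρ(N)` is Zariski dense in `GL_m(k)` (every
polynomial in the matrix entries vanishing on `ρ(N)` vanishes on all of `GL_m(k)`).
Then `N` admits a finite generating set `S` such that `trace ρ(α)` has nonzero trace for every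
`α ∈ S`. -/
theorem exists_generating_set_with_nonzero_traces
    {N Q : Type*} [Group N] [Group Q] (φ : Q →* MulAut N)
    (k : Type*) [Field k] [IsAlgClosed k] (m : ℕ) (hm : 0 < m)
    (hfg : Group.FG N)
    (ρ : N ⋊[φ] Q →* Matrix.GeneralLinearGroup (Fin m) k)
    (hdense : ∀ p : MvPolynomial (Fin m × Fin m) k,
      (∀ α : N,
        MvPolynomial.eval
          (fun uv : Fin m × Fin m => (ρ (inl α) : Matrix (Fin m) (Fin m) k) uv.1 uv.2) p = 0) →
      ∀ M : Matrix.GeneralLinearGroup (Fin m) k,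
        MvPolynomial.eval
          (fun uv : Fin m × Fin m => (M : Matrix (Fin m) (Fin m) k) uv.1 uv.2) p = 0) :
    ∃ S : Finset N, Subgroup.closure (S : Set N) = ⊤ ∧
      ∀ α ∈ S, Matrix.trace ((ρ (inl α) : Matrix (Fin m) (Fin m) k)) ≠ 0 := by
  classical
  have hne : Nonempty (Fin m) := ⟨⟨0, hm⟩⟩
  obtain ⟨S₀, hS₀⟩ := hfg.out
  set Aof : N → Matrix (Fin m) (Fin m) k := fun α => (ρ (inl α) : Matrix (Fin m) (Fin m) k)
    with hAof
  have hAunit : ∀ α, IsUnit (Aof α).det :=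
    fun α => (Matrix.isUnit_iff_isUnit_det _).mp (ρ (inl α)).isUnit
  set p : MvPolynomial (Fin m × Fin m) k :=
    (Xmat m k).trace * ∏ α ∈ S₀, ((Xmat m k).adjugate * (Aof α).map MvPolynomial.C).trace
    with hpdef
  have hp : p ≠ 0 :=
    mul_ne_zero (trace_Xmat_ne_zero hm)
      (Finset.prod_ne_zero_iff.mpr fun α _ => trace_adj_mul_ne_zero hm (hAunit α))
  have hq : (Xmat m k).det * p ≠ 0 := mul_ne_zero det_Xmat_ne_zero hp
  -- there exists α₀ with eval at ρ(inl α₀) nonzero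
  have hex : ∃ α₀ : N,
      MvPolynomial.eval (fun uv : Fin m × Fin m => Aof α₀ uv.1 uv.2) p ≠ 0 := by
    by_contra h
    push_neg at h
    obtain ⟨v, hv⟩ := exists_eval_ne_zero hq
    rw [_root_.map_mul, p16_eval_det] at hv
    set B : Matrix (Fin m) (Fin m) k := Matrix.of fun i j => v (i, j) with hBdef
    have hdetB : IsUnit B.det := by
      refine Ne.isUnit fun h0 => hv ?_
      rw [h0, zero_mul]
    obtain ⟨u, hu⟩ := (Matrix.isUnit_iff_isUnit_det B).mpr hdetB
    have hall := hdense p h u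
    have hvu : (fun uv : Fin m × Fin m => (u : Matrix (Fin m) (Fin m) k) uv.1 uv.2) = v := by
      funext uv
      rw [hu]
      rfl
    rw [hvu] at hall
    exact hv (by rw [hall, mul_zero])
  obtain ⟨α₀, hα₀⟩ := hex
  rw [hpdef, _root_.map_mul, map_prod, p16_eval_trace] at hα₀
  have hof : (Matrix.of fun i j =>
      (fun uv : Fin m × Fin m => Aof α₀ uv.1 uv.2) (i, j)) = Aof α₀ := by
    ext i j; simp
  rw [hof] at hα₀
  have htr : (Aof α₀).trace ≠ 0 := left_ne_zero_of_mul hα₀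
  have hprod := right_ne_zero_of_mul hα₀
  have hfac : ∀ α ∈ S₀, ((Aof α₀).adjugate * Aof α).trace ≠ 0 := by
    intro α hα
    have := Finset.prod_ne_zero_iff.mp hprod α hα
    rwa [p16_eval_trace_adj_mul, hof] at this
  -- define S
  refine ⟨insert α₀ (S₀.image fun α => α₀⁻¹ * α), ?_, ?_⟩
  · rw [eq_top_iff, ← hS₀, Subgroup.closure_le]
    intro α hα
    have h1 : α₀ ∈ Subgroup.closure
        ((insert α₀ (S₀.image fun α => α₀⁻¹ * α) : Finset N) : Set N) :=
      Subgroup.subset_closure (by simp)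
    have h2 : α₀⁻¹ * α ∈ Subgroup.closure
        ((insert α₀ (S₀.image fun α => α₀⁻¹ * α) : Finset N) : Set N) :=
      Subgroup.subset_closure (by
        simp only [Finset.coe_insert, Set.mem_insert_iff, Finset.coe_image, Set.mem_image,
          Finset.mem_coe]
        exact Or.inr ⟨α, hα, rfl⟩)
    have := mul_mem h1 h2
    rwa [mul_inv_cancel_left] at this
  · intro α hα
    rcases Finset.mem_insert.mp hα with rfl | hα
    · exact htr
    · obtain ⟨β, hβ, rfl⟩ := Finset.mem_image.mp hα
      have hcoe : (ρ (inl (α₀⁻¹ * β)) : Matrix (Fin m) (Fin m) k)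
          = (Aof α₀)⁻¹ * Aof β := by
        rw [hAof]
        simp only [_root_.map_mul, _root_.map_inv, Units.val_mul, Matrix.coe_units_inv]
      rw [hcoe, Matrix.inv_def, Ring.inverse_eq_inv, Matrix.smul_mul, Matrix.trace_smul,
        smul_eq_mul]
      exact mul_ne_zero (inv_ne_zero (hAunit α₀).ne_zero) (hfac β hβ)
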